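/- For every α ∈ (-1/2, 1/2) with α ≠ 0, there is a constant C = C(α) such that for all 0 < s < t one has ((t^α - s^α)/(t - s)) · s^{1/2 - α} · t^{1/2} ≤ C · (s/t)^{1/2 - max(α, 0)}. Here when α < 0 the quantity (t^α - s^α)/(t-s) is negative and one bounds its absolute value: |t^α - s^α|/(t - s) · s^{1/2 - α} · t^{1/2} ≤ C (s/t)^{1/2 - max(α,0)}. -/
import Mathlib

open MeasureTheory Set Filter Topology

/-- For every `α ∈ (-1/2, 1/2)`, `α ≠ 0`, there is a constant `C` such that
for all `0 < s < t`, `|t^α - s^α|/(t - s) · s^{1/2-α} · t^{1/2} ≤ C (s/t)^{1/2 - max(α,0)}`. -/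
theorem stmt1 (α : ℝ) (hα : α ∈ Ioo (-(1/2) : ℝ) (1/2)) (hα0 : α ≠ 0) :
    ∃ C : ℝ, 0 < C ∧ ∀ s t : ℝ, 0 < s → s < t →
      |t ^ α - s ^ α| / (t - s) * s ^ ((1:ℝ)/2 - α) * t ^ ((1:ℝ)/2)
        ≤ C * (s / t) ^ ((1:ℝ)/2 - max α 0) := by
  obtain ⟨hα1, hα2⟩ := hα
  refine ⟨1, one_pos, fun s t hs hst => ?_⟩
  have ht : (0:ℝ) < t := hs.trans hst
  have hts : (0:ℝ) < t - s := by linarith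
  rw [one_mul, div_mul_eq_mul_div, div_mul_eq_mul_div, div_le_iff₀ hts]
  rcases lt_or_gt_of_ne hα0 with hneg | hpos
  · -- α < 0
    have hmax : max α 0 = 0 := max_eq_right hneg.le
    have habs : |t ^ α - s ^ α| = s ^ α - t ^ α := by
      rw [abs_sub_comm]
      exact abs_of_pos (by linarith [Real.rpow_lt_rpow_of_neg hs hst hneg])
    rw [habs, hmax, sub_zero]
    have k : s * s ^ α ≤ t * t ^ α := by
      have h := Real.rpow_le_rpow hs.le hst.le (show (0:ℝ) ≤ 1 + α by linarith)
      rwa [Real.rpow_one_add' hs.le (by intro h; apply hα0; linarith),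
        Real.rpow_one_add' ht.le (by intro h; apply hα0; linarith)] at h
    have key2 : (s ^ α - t ^ α) * t ≤ (t - s) * s ^ α := by nlinarith [k]
    have key2' : s ^ α - t ^ α ≤ (t - s) * s ^ α * t⁻¹ := by
      have h := (le_div_iff₀ ht).mpr key2
      rwa [div_eq_mul_inv] at h
    have e1 : s ^ α * s ^ ((1:ℝ)/2 - α) = s ^ ((1:ℝ)/2) := by
      rw [← Real.rpow_add hs]; congr 1; ring
    have e2 : t⁻¹ * t ^ ((1:ℝ)/2) = t ^ (-((1:ℝ)/2)) := by
      rw [← Real.rpow_neg_one t, ← Real.rpow_add ht]; congr 1; ring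
    have heq2 : (t - s) * s ^ α * t⁻¹ * s ^ ((1:ℝ)/2 - α) * t ^ ((1:ℝ)/2)
        = (s / t) ^ ((1:ℝ)/2) * (t - s) := by
      rw [Real.div_rpow hs.le ht.le,
        div_eq_mul_inv (s ^ ((1:ℝ)/2)) (t ^ ((1:ℝ)/2)), ← Real.rpow_neg ht.le]
      rw [show (t - s) * s ^ α * t⁻¹ * s ^ ((1:ℝ)/2 - α) * t ^ ((1:ℝ)/2)
          = (t - s) * (s ^ α * s ^ ((1:ℝ)/2 - α)) * (t⁻¹ * t ^ ((1:ℝ)/2)) by ring, e1, e2]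
      ring
    calc (s ^ α - t ^ α) * s ^ ((1:ℝ)/2 - α) * t ^ ((1:ℝ)/2)
        ≤ (t - s) * s ^ α * t⁻¹ * s ^ ((1:ℝ)/2 - α) * t ^ ((1:ℝ)/2) := by
          gcongr
      _ = _ := heq2
  · -- α > 0
    have hmax : max α 0 = α := max_eq_left hpos.le
    have habs : |t ^ α - s ^ α| = t ^ α - s ^ α :=
      abs_of_pos (by linarith [Real.rpow_lt_rpow hs.le hst hpos])
    rw [habs, hmax]
    have key : t ^ α - s ^ α ≤ (t - s) * t ^ (α - 1) := by
      have h1 : t * t ^ (α - 1) = t ^ α := by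
        rw [← Real.rpow_one_add' ht.le (by intro h; apply hα0; linarith)]; ring_nf
      have h2 : s * t ^ (α - 1) ≤ s ^ α := by
        have hb : t ^ (α - 1) ≤ s ^ (α - 1) :=
          Real.rpow_le_rpow_of_nonpos hs hst.le (by linarith)
        calc s * t ^ (α - 1) ≤ s * s ^ (α - 1) :=
              mul_le_mul_of_nonneg_left hb hs.le
          _ = s ^ α := by
              rw [← Real.rpow_one_add' hs.le (by intro h; apply hα0; linarith)]; ring_nf
      nlinarith [h1, h2]
    have h5 : t ^ (-((1:ℝ)/2 - α)) = t ^ (α - 1) * t ^ ((1:ℝ)/2) := by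
      rw [← Real.rpow_add ht]; congr 1; ring
    have heq : (t - s) * t ^ (α - 1) * s ^ ((1:ℝ)/2 - α) * t ^ ((1:ℝ)/2)
        = (s / t) ^ ((1:ℝ)/2 - α) * (t - s) := by
      rw [Real.div_rpow hs.le ht.le,
        div_eq_mul_inv (s ^ ((1:ℝ)/2 - α)) (t ^ ((1:ℝ)/2 - α)), ← Real.rpow_neg ht.le, h5]
      ring
    calc (t ^ α - s ^ α) * s ^ ((1:ℝ)/2 - α) * t ^ ((1:ℝ)/2)
        ≤ (t - s) * t ^ (α - 1) * s ^ ((1:ℝ)/2 - α) * t ^ ((1:ℝ)/2) := by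
          gcongr
      _ = _ := heq
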